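/- Packing lower bound (pattern-length bound): Let P have length m and k < m. Suppose Alg is an ε-differentially private algorithm on strings of length n (n a multiple of m, n/m ≥ 2) such that whenever S contains a window at some j with dist_H(S[j,j+m-1],P) ≤ k, Alg outputs, with probability ≥ 2/3, a position i with dist_H(S[i,i+m-1],P) ≤ k + α, where α < m − k. Then m ≥ (2ε)^{-1}(ln(n/(2m)) + ln(2/3)). -/

import Mathlib

/-- Packing lower bound (pattern-length bound): any `ε`-differentially private
algorithm on strings of length `n` that, whenever some window of `S` is within
Hamming distance `k` of `P`, outputs with probability at least `2/3` a position
whose window is within distance `k + α` of `P` (with `α < m − k`), must have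
`m ≥ (2ε)⁻¹ (ln(n/(2m)) + ln(2/3))`. -/
theorem packing_lower_bound_pattern_length {σ : Type*} [DecidableEq σ]
    {n m k α : ℕ} (hm : 0 < m) (hmn : m ≤ n) (hmod : m ∣ n) (h2 : 2 ≤ n / m)
    (P : Fin m → σ) (hdollar : ∃ d : σ, d ∉ Set.range P)
    (hk : k < m) (hα : α < m - k)
    (ε : ℝ) (hε : 0 < ε) (Alg : (Fin n → σ) → PMF ℕ)
    (hDP : ∀ S S' : Fin n → σ, hammingDist S S' = 1 → ∀ Out : Set ℕ,
      (Alg S).toOuterMeasure Out ≤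
        ENNReal.ofReal (Real.exp ε) * (Alg S').toOuterMeasure Out)
    (hUtil : ∀ S : Fin n → σ,
      (∃ j, j ≤ n - m ∧
        hammingDist
          (fun t : Fin m => S ⟨(j + t.1) % n, Nat.mod_lt _ (lt_of_lt_of_le hm hmn)⟩) P ≤ k) →
      (2 / 3 : ENNReal) ≤ (Alg S).toOuterMeasure
        {i | i ≤ n - m ∧
          hammingDist
            (fun t : Fin m => S ⟨(i + t.1) % n, Nat.mod_lt _ (lt_of_lt_of_le hm hmn)⟩) P ≤
            k + α}) :
    (2 * ε)⁻¹ * (Real.log ((n : ℝ) / (2 * m)) + Real.log (2 / 3)) ≤ (m : ℝ) := by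
  -- group privacy
  have group : ∀ (dd : ℕ) (S S' : Fin n → σ), hammingDist S S' ≤ dd → ∀ Out : Set ℕ,
      (Alg S).toOuterMeasure Out ≤
        ENNReal.ofReal (Real.exp (dd * ε)) * (Alg S').toOuterMeasure Out := by
    intro dd
    induction dd with
    | zero =>
      intro S S' h Out
      have : S = S' := hammingDist_eq_zero.mp (Nat.le_zero.mp h)
      subst this
      simp
    | succ dd ih =>
      intro S S' h Out
      rcases Nat.lt_or_ge (hammingDist S S') (dd+1) with hlt | hge
      · refine (ih S S' (Nat.lt_succ_iff.mp hlt) Out).trans ?_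
        refine mul_le_mul_left (ENNReal.ofReal_le_ofReal ?_) _
        apply Real.exp_le_exp.mpr
        push_cast
        nlinarith
      · have heq : hammingDist S S' = dd + 1 := le_antisymm h hge
        have hne : S ≠ S' := by
          intro e; subst e; simp at heq
        obtain ⟨i, hi⟩ := Function.ne_iff.mp hne
        set T := Function.update S i (S' i) with hT
        have h1 : hammingDist S T = 1 := by
          rw [hammingDist, Finset.card_eq_one]
          refine ⟨i, ?_⟩
          ext x
          simp only [Finset.mem_filter, Finset.mem_univ, true_and, Finset.mem_singleton]
          constructor
          · intro hx
            by_contra hxi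
            exact hx (by simp [hT, Function.update_of_ne hxi])
          · intro hx; subst hx
            simpa [hT] using hi
        have hstep : hammingDist T S' ≤ dd := by
          have hsub : (Finset.univ.filter fun x => T x ≠ S' x) ⊆
              (Finset.univ.filter fun x => S x ≠ S' x).erase i := by
            intro x hx
            simp only [Finset.mem_filter, Finset.mem_univ, true_and] at hx
            have hxi : x ≠ i := by
              intro e; subst e; exact hx (by simp [hT])
            refine Finset.mem_erase.mpr ⟨hxi, ?_⟩
            simp only [Finset.mem_filter, Finset.mem_univ, true_and]
            simpa [hT, Function.update_of_ne hxi] using hx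
          have hcard : (Finset.univ.filter fun x => S x ≠ S' x).card = dd + 1 := heq
          rw [hammingDist]
          calc (Finset.univ.filter fun x => T x ≠ S' x).card
              ≤ ((Finset.univ.filter fun x => S x ≠ S' x).erase i).card :=
                Finset.card_le_card hsub
            _ = (Finset.univ.filter fun x => S x ≠ S' x).card - 1 :=
                Finset.card_erase_of_mem (by simpa using hi)
            _ = dd := by omega
        calc (Alg S).toOuterMeasure Out
            ≤ ENNReal.ofReal (Real.exp ε) * (Alg T).toOuterMeasure Out := hDP S T h1 Out
          _ ≤ ENNReal.ofReal (Real.exp ε) *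
                (ENNReal.ofReal (Real.exp (dd * ε)) * (Alg S').toOuterMeasure Out) :=
              mul_le_mul_right (ih T S' hstep Out) _
          _ = ENNReal.ofReal (Real.exp ((dd+1 : ℕ) * ε)) * (Alg S').toOuterMeasure Out := by
              rw [← mul_assoc, ← ENNReal.ofReal_mul (Real.exp_nonneg ε), ← Real.exp_add]
              congr 2
              push_cast
              ring
  obtain ⟨d, hd⟩ := hdollar
  have hdP : ∀ t : Fin m, d ≠ P t := fun t h => hd ⟨t, h.symm⟩
  set q := n / m with hq
  have hnq : n = q * m := (Nat.div_mul_cancel hmod).symm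
  set N := (q + 1) / 2 with hN
  have hNq : q ≤ 2 * N ∧ 2 * N ≤ q + 1 := by omega
  have hNpos : 0 < N := by omega
  -- packing strings
  set Str : ℕ → Fin n → σ := fun r x =>
    if h : 2*r*m ≤ x.1 ∧ x.1 < 2*r*m + m then P ⟨x.1 - 2*r*m, by omega⟩ else d with hStr
  have hrange : ∀ r < N, 2*r*m + m ≤ n := by
    intro r hr
    have h1 : 2*r + 1 ≤ q := by omega
    calc 2*r*m + m = (2*r+1)*m := by ring
      _ ≤ q * m := Nat.mul_le_mul_right m h1
      _ = n := hnq.symm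
  -- events
  set B : ℕ → Set ℕ := fun r =>
    {i | i ≤ n - m ∧
      hammingDist
        (fun t : Fin m => Str r ⟨(i + t.1) % n, Nat.mod_lt _ (lt_of_lt_of_le hm hmn)⟩) P ≤
        k + α} with hB
  -- utility for each packing string
  have hutil : ∀ r < N, (2/3 : ENNReal) ≤ (Alg (Str r)).toOuterMeasure (B r) := by
    intro r hr
    refine hUtil (Str r) ⟨2*r*m, ?_, ?_⟩
    · have := hrange r hr; omega
    · have : (fun t : Fin m =>
          Str r ⟨(2*r*m + t.1) % n, Nat.mod_lt _ (lt_of_lt_of_le hm hmn)⟩) = P := by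
        funext t
        have ht : 2*r*m + t.1 < n := by have := hrange r hr; omega
        have hmod' : (2*r*m + t.1) % n = 2*r*m + t.1 := Nat.mod_eq_of_lt ht
        simp only [hStr]
        rw [dif_pos]
        · congr 1
          apply Fin.ext
          simp [hmod']
        · simp only [hmod']
          constructor
          · omega
          · have := t.2; omega
      rw [this]
      simp
  -- containment: B r sits in the interval around the block
  have hcontain : ∀ r < N, ∀ i ∈ B r, 2*r*m < i + m ∧ i < 2*r*m + m := by
    intro r hr i hi
    obtain ⟨hi1, hi2⟩ := hi
    by_contra hcon
    push_neg at hcon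
    have hout : ∀ t : Fin m,
        Str r ⟨(i + t.1) % n, Nat.mod_lt _ (lt_of_lt_of_le hm hmn)⟩ ≠ P t := by
      intro t
      have ht : i + t.1 < n := by omega
      have hmod' : (i + t.1) % n = i + t.1 := Nat.mod_eq_of_lt ht
      have hsplit : i + m ≤ 2*r*m ∨ 2*r*m + m ≤ i := by
        rcases Nat.lt_or_ge (i + m) (2*r*m + 1) with h' | h'
        · left; omega
        · right; exact hcon (by omega)
      have ht2 := t.2
      simp only [hStr]
      rw [dif_neg]
      · exact hdP t
      · rw [hmod']
        omega
    have : hammingDist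
        (fun t : Fin m => Str r ⟨(i + t.1) % n, Nat.mod_lt _ (lt_of_lt_of_le hm hmn)⟩) P = m := by
      rw [hammingDist, Finset.filter_true_of_mem (fun t _ => hout t), Finset.card_univ,
        Fintype.card_fin]
    omega
  -- block cardinality helper
  have hblock : ∀ a : ℕ, (Finset.univ.filter fun x : Fin n => a ≤ x.1 ∧ x.1 < a + m).card ≤ m := by
    intro a
    have h := Finset.card_le_card_of_injOn
      (s := Finset.univ.filter fun x : Fin n => a ≤ x.1 ∧ x.1 < a + m)
      (t := Finset.range m) (f := fun x : Fin n => x.1 - a)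
      (fun x hx => by
        simp only [Finset.coe_filter, Finset.mem_coe, Finset.mem_filter, Finset.mem_univ, true_and, Set.mem_setOf_eq] at hx
        simp only [Finset.mem_coe, Finset.mem_range]
        omega)
      (fun x hx y hy hxy => by
        simp only [Finset.coe_filter, Set.mem_setOf_eq, Finset.mem_univ, true_and] at hx hy
        simp only at hxy
        exact Fin.ext (by omega))
    simpa using h
  -- Hamming distance from Str 0 to Str r is at most 2m
  have hdist : ∀ r : ℕ, hammingDist (Str 0) (Str r) ≤ 2 * m := by
    intro r
    have haux : ∀ s : ℕ, hammingDist (Str s) (fun _ => d) ≤ m := by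
      intro s
      rw [hammingDist]
      calc (Finset.univ.filter fun x : Fin n => Str s x ≠ d).card
          ≤ (Finset.univ.filter fun x : Fin n => 2*s*m ≤ x.1 ∧ x.1 < 2*s*m + m).card := by
            apply Finset.card_le_card
            intro x hx
            simp only [Finset.mem_filter, Finset.mem_univ, true_and] at hx ⊢
            by_contra hc
            exact hx (by simp only [hStr]; rw [dif_neg hc])
        _ ≤ m := hblock _
    calc hammingDist (Str 0) (Str r)
        ≤ hammingDist (Str 0) (fun _ => d) + hammingDist (fun _ => d) (Str r) :=
          hammingDist_triangle _ _ _
      _ ≤ m + m := add_le_add (haux 0) (by rw [hammingDist_comm]; exact haux r)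
      _ = 2 * m := by ring
  -- lower bound on Alg (Str 0) on each B r
  have hlow : ∀ r < N, (2/3 : ENNReal) ≤
      ENNReal.ofReal (Real.exp (2*m*ε)) * (Alg (Str 0)).toOuterMeasure (B r) := by
    intro r hr
    refine (hutil r hr).trans ?_
    have := group (2*m) (Str r) (Str 0) (by rw [hammingDist_comm]; exact hdist r) (B r)
    simpa using this
  -- disjointness
  have key : ∀ a b : ℕ, 2*a*m < 2*b*m + 2*m → a ≤ b := by
    intro a b hab
    have h1 : (2*a)*m < (2*b+2)*m := by rw [Nat.add_mul]; omega
    have h2 : 2*a < 2*b+2 := lt_of_mul_lt_mul_right h1 (Nat.zero_le m)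
    omega
  have hdisj : ∀ r < N, ∀ r' < N, r ≠ r' → Disjoint (B r) (B r') := by
    intro r hr r' hr' hne
    rw [Set.disjoint_left]
    intro i hiB hiB'
    have h1 := hcontain r hr i hiB
    have h2 := hcontain r' hr' i hiB'
    have k1 : r' ≤ r := key r' r (by omega)
    have k2 : r ≤ r' := key r r' (by omega)
    omega
  -- summation
  have hmeas : ∀ s : Set ℕ, MeasurableSet s := fun s => trivial
  have hsum : ∑ r ∈ Finset.range N, (Alg (Str 0)).toOuterMeasure (B r) ≤ 1 := by
    have heq : ∀ r, (Alg (Str 0)).toOuterMeasure (B r) = (Alg (Str 0)).toMeasure (B r) :=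
      fun r => ((Alg (Str 0)).toMeasure_apply_eq_toOuterMeasure_apply (hmeas _)).symm
    simp only [heq]
    rw [← MeasureTheory.measure_biUnion_finset ?_ (fun r _ => hmeas _)]
    · calc (Alg (Str 0)).toMeasure (⋃ r ∈ Finset.range N, B r) ≤ (Alg (Str 0)).toMeasure Set.univ :=
          MeasureTheory.measure_mono (Set.subset_univ _)
        _ = 1 := MeasureTheory.measure_univ
    · intro r hr r' hr' hne
      exact (hdisj r (Finset.mem_range.mp hr) r' (Finset.mem_range.mp hr') hne)
  -- combine
  have hNsum : (N : ENNReal) * (2/3) ≤ ENNReal.ofReal (Real.exp (2*(m:ℝ)*ε)) := by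
    calc (N : ENNReal) * (2/3) = ∑ _r ∈ Finset.range N, (2/3 : ENNReal) := by
          simp [Finset.sum_const, nsmul_eq_mul]
      _ ≤ ∑ r ∈ Finset.range N,
            ENNReal.ofReal (Real.exp (2*(m:ℝ)*ε)) * (Alg (Str 0)).toOuterMeasure (B r) :=
          Finset.sum_le_sum (fun r hr => hlow r (Finset.mem_range.mp hr))
      _ = ENNReal.ofReal (Real.exp (2*(m:ℝ)*ε)) *
            ∑ r ∈ Finset.range N, (Alg (Str 0)).toOuterMeasure (B r) := by
          rw [Finset.mul_sum]
      _ ≤ ENNReal.ofReal (Real.exp (2*(m:ℝ)*ε)) * 1 := mul_le_mul_right hsum _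
      _ = ENNReal.ofReal (Real.exp (2*(m:ℝ)*ε)) := mul_one _
  have h23 : ((2:ENNReal)/3) = ENNReal.ofReal (2/3 : ℝ) := by
    rw [ENNReal.ofReal_div_of_pos (by norm_num)]
    norm_num
  have hreal : (N : ℝ) * (2/3) ≤ Real.exp (2*(m:ℝ)*ε) := by
    rw [← ENNReal.ofReal_le_ofReal_iff (Real.exp_nonneg _)]
    calc ENNReal.ofReal ((N:ℝ) * (2/3)) = (N : ENNReal) * (2/3) := by
          rw [ENNReal.ofReal_mul (by positivity), ENNReal.ofReal_natCast, h23]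
      _ ≤ _ := hNsum
  have hmpos : (0:ℝ) < m := by exact_mod_cast hm
  have hnpos : (0:ℝ) < n := by have : 0 < n := lt_of_lt_of_le hm hmn; exact_mod_cast this
  have hNge : (n:ℝ)/(2*m) ≤ (N:ℝ) := by
    rw [div_le_iff₀ (by positivity)]
    have h1 : (n:ℝ) = (q:ℝ) * m := by exact_mod_cast hnq
    have hq2N : (q:ℝ) ≤ 2*(N:ℝ) := by exact_mod_cast hNq.1
    nlinarith
  have hfin : (2/3:ℝ) * ((n:ℝ)/(2*m)) ≤ Real.exp (2*(m:ℝ)*ε) := by nlinarith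
  have hxpos : (0:ℝ) < (n:ℝ)/(2*m) := by positivity
  have hlog : Real.log ((2/3:ℝ) * ((n:ℝ)/(2*m))) ≤ 2*(m:ℝ)*ε := by
    have h := Real.log_le_log (by positivity) hfin
    rwa [Real.log_exp] at h
  rw [Real.log_mul (by norm_num) (ne_of_gt hxpos)] at hlog
  rw [inv_mul_le_iff₀ (by positivity : (0:ℝ) < 2*ε)]
  linarith
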